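/- A subset A of a topological space X is e*-θ-open if and only if for each x ∈ A there exists an e*-regular set U with x ∈ U ⊆ A. -/
import Mathlib


open Set Topology

variable {X : Type*} [TopologicalSpace X]

/-- δ-closure of A. -/
def deltaCl (A : Set X) : Set X :=
  {x | ∀ U : Set X, IsOpen U → x ∈ U → (interior (closure U) ∩ A).Nonempty}

/-- A is e*-open if A ⊆ cl(int(δ-cl A)). -/
def EStarOpen (A : Set X) : Prop := A ⊆ closure (interior (deltaCl A))

/-- A is e*-closed if its complement is e*-open. -/
def EStarClosed (A : Set X) : Prop := EStarOpen Aᶜ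

/-- e*-closure: intersection of all e*-closed supersets. -/
def eStarCl (A : Set X) : Set X := ⋂₀ {F | EStarClosed F ∧ A ⊆ F}

/-- e*-interior: union of all e*-open subsets. -/
def eStarInt (A : Set X) : Set X := ⋃₀ {U | EStarOpen U ∧ U ⊆ A}

/-- e*-regular: both e*-open and e*-closed. -/
def EStarRegular (A : Set X) : Prop := EStarOpen A ∧ EStarClosed A

/-- e*-θ-closure. -/
def eStarClTheta (A : Set X) : Set X :=
  {x | ∀ U : Set X, EStarOpen U → x ∈ U → (eStarCl U ∩ A).Nonempty}

/-- e*-θ-closed. -/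
def EStarThetaClosed (A : Set X) : Prop := A = eStarClTheta A

/-- e*-θ-open. -/
def EStarThetaOpen (A : Set X) : Prop := EStarThetaClosed Aᶜ

/-- quasi e*-θ-closed. -/
def QEStarThetaClosed (A : Set X) : Prop :=
  ∀ U : Set X, EStarThetaOpen U → A ⊆ U → eStarClTheta A ⊆ U

/-- e*-θ-kernel. -/
def eStarKerTheta (A : Set X) : Set X := ⋂₀ {U | EStarThetaOpen U ∧ A ⊆ U}

lemma subset_deltaCl (A : Set X) : A ⊆ deltaCl A := by
  intro x hx U hU hxU
  exact ⟨x, interior_maximal subset_closure hU hxU, hx⟩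

lemma deltaCl_mono {A B : Set X} (h : A ⊆ B) : deltaCl A ⊆ deltaCl B := by
  intro x hx U hU hxU
  obtain ⟨y, hy1, hy2⟩ := hx U hU hxU
  exact ⟨y, hy1, h hy2⟩

lemma isOpen_eStarOpen {A : Set X} (h : IsOpen A) : EStarOpen A := by
  intro x hx
  apply subset_closure
  exact interior_mono (subset_deltaCl A) (h.subset_interior_iff.2 subset_rfl hx)

lemma isClosed_eStarClosed {A : Set X} (h : IsClosed A) : EStarClosed A :=
  isOpen_eStarOpen h.isOpen_compl

lemma eStarOpen_sUnion {S : Set (Set X)} (h : ∀ A ∈ S, EStarOpen A) :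
    EStarOpen (⋃₀ S) := by
  intro x hx
  obtain ⟨A, hA, hxA⟩ := hx
  exact closure_mono (interior_mono (deltaCl_mono (subset_sUnion_of_mem hA))) (h A hA hxA)

lemma eStarClosed_eStarCl (A : Set X) : EStarClosed (eStarCl A) := by
  have : (eStarCl A)ᶜ = ⋃₀ {U | EStarClosed Uᶜ ∧ A ⊆ Uᶜ} := by
    simp [eStarCl, Set.compl_sInter, Set.sUnion_image]
    ext y; simp
    constructor
    · rintro ⟨F, ⟨h1, h2⟩, h3⟩; exact ⟨Fᶜ, ⟨by simpa using h1, by simpa using h2⟩, h3⟩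
    · rintro ⟨F, ⟨h1, h2⟩, h3⟩; exact ⟨Fᶜ, ⟨h1, h2⟩, by simpa using h3⟩
  unfold EStarClosed
  rw [this]
  exact eStarOpen_sUnion (fun U hU => by simpa [EStarClosed] using hU.1)

lemma subset_eStarCl (A : Set X) : A ⊆ eStarCl A := by
  intro x hx F hF
  exact hF.2 hx

lemma eStarCl_min {A F : Set X} (hF : EStarClosed F) (h : A ⊆ F) : eStarCl A ⊆ F :=
  sInter_subset_of_mem ⟨hF, h⟩

lemma eStarOpen_eStarCl {A : Set X} (h : EStarOpen A) : EStarOpen (eStarCl A) := by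
  have h1 : eStarCl A ⊆ closure (interior (deltaCl A)) :=
    eStarCl_min (isClosed_eStarClosed isClosed_closure) h
  exact h1.trans (closure_mono (interior_mono (deltaCl_mono (subset_eStarCl A))))

theorem stmt4 (A : Set X) :
    EStarThetaOpen A ↔ ∀ x ∈ A, ∃ U : Set X, EStarRegular U ∧ x ∈ U ∧ U ⊆ A := by
  constructor
  · intro h x hx
    have hx' : x ∉ eStarClTheta Aᶜ := by rw [← h]; simpa using hx
    simp only [eStarClTheta, mem_setOf_eq, not_forall] at hx'
    obtain ⟨V, hV, hxV, hne⟩ := hx'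
    refine ⟨eStarCl V, ⟨eStarOpen_eStarCl hV, eStarClosed_eStarCl V⟩,
      subset_eStarCl V hxV, ?_⟩
    intro y hy
    by_contra hy'
    exact hne ⟨y, hy, hy'⟩
  · intro h
    unfold EStarThetaOpen EStarThetaClosed
    ext x
    constructor
    · intro hx U hU hxU
      exact ⟨x, subset_eStarCl U hxU, hx⟩
    · intro hx
      by_contra hxA
      simp only [mem_compl_iff, not_not] at hxA
      obtain ⟨U, ⟨hUo, hUc⟩, hxU, hUA⟩ := h x hxA
      obtain ⟨y, hy1, hy2⟩ := hx U hUo hxU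
      exact hy2 (hUA (eStarCl_min hUc subset_rfl hy1))
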